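/- Let G be a group with identity e, let M and N be abelian groups, and let μ_M : G → End(M) and μ_N : G → End(N) be functions (not assumed multiplicative) with μ_M(e) = id and μ_N(e) = id. For n ≥ 0 and a function f : Gⁿ → Hom(M,N), define ∇f : G^{n+1} → Hom(M,N) by ∇f(g₁,…,g_{n+1}) = μ_N(g₁)∘f(g₂,…,g_{n+1}) + Σ_{i=1}^{n} (−1)ⁱ f(g₁,…,g_i g_{i+1},…,g_{n+1}) + (−1)^{n+1} f(g₁,…,gₙ)∘μ_M(g_{n+1}). Then for all g₁,…,g_{n+2} ∈ G, ∇(∇f)(g₁,…,g_{n+2}) = (μ_N(g₁)∘μ_N(g₂) − μ_N(g₁g₂))∘f(g₃,…,g_{n+2}) − f(g₁,…,gₙ)∘(μ_M(g_{n+1})∘μ_M(g_{n+2}) − μ_M(g_{n+1}g_{n+2})). -/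
import Mathlib


/-- Given a tuple `(g₁, …, g_{n+1})`, multiply the entries at positions `i+1` and `i+2`
(1-indexed: replace `(…, gᵢ₊₁, gᵢ₊₂, …)` by `(…, gᵢ₊₁·gᵢ₊₂, …)`), producing a tuple of
length `n`. -/
def mergeAt {G : Type*} [Mul G] {n : ℕ} (i : Fin n) (g : Fin (n + 1) → G) : Fin n → G :=
  fun j =>
    if (j : ℕ) < (i : ℕ) then g j.castSucc
    else if (j : ℕ) = (i : ℕ) then g j.castSucc * g j.succ
    else g j.succ

/-- The connection (differential) on inhomogeneous group cochains with values in
`Hom(M, N)`, twisted by the (not necessarily multiplicative) maps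
`μ_M : G → End(M)` and `μ_N : G → End(N)`:
`∇f(g₁,…,g_{n+1}) = μ_N(g₁)∘f(g₂,…,g_{n+1}) + Σᵢ (−1)ⁱ f(g₁,…,gᵢgᵢ₊₁,…,g_{n+1})
  + (−1)^{n+1} f(g₁,…,gₙ)∘μ_M(g_{n+1})`. -/
def nabla {G M N : Type*} [Group G] [AddCommGroup M] [AddCommGroup N]
    (μM : G → (M →+ M)) (μN : G → (N →+ N)) {n : ℕ}
    (f : (Fin n → G) → (M →+ N)) : (Fin (n + 1) → G) → (M →+ N) :=
  fun g =>
    (μN (g 0)).comp (f (fun j => g j.succ))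
    + ∑ i : Fin n, ((-1 : ℤ) ^ ((i : ℕ) + 1)) • f (mergeAt i g)
    + ((-1 : ℤ) ^ (n + 1)) • (f (fun j => g j.castSucc)).comp (μM (g (Fin.last n)))

namespace NablaAux

section mul
variable {G : Type*} [Semigroup G]

def mN (i : ℕ) (u : ℕ → G) : ℕ → G :=
  fun j => if j < i then u j else if j = i then u j * u (j+1) else u (j+1)

lemma mergeAt_restr {n : ℕ} (i : Fin n) (u : ℕ → G) :
    mergeAt i (fun j : Fin (n+1) => u j) = fun j : Fin n => mN i u j := by
  funext j
  simp only [mergeAt, mN, Fin.coe_castSucc, Fin.val_succ]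

lemma mN_zero_zero (u : ℕ → G) : mN 0 u 0 = u 0 * u 1 := by simp [mN]

lemma mN_succ_zero (i : ℕ) (u : ℕ → G) : mN (i+1) u 0 = u 0 := by simp [mN]

lemma mN_apply_of_lt {i j : ℕ} (h : j < i) (u : ℕ → G) : mN i u j = u j := by
  simp [mN, h]

lemma mN_apply_of_gt {i j : ℕ} (h : i < j) (u : ℕ → G) : mN i u j = u (j+1) := by
  simp only [mN]; rw [if_neg (by omega), if_neg (by omega)]

lemma mN_zero_succ (j : ℕ) (u : ℕ → G) : mN 0 u (j+1) = u (j+1+1) :=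
  mN_apply_of_gt (Nat.succ_pos j) u

lemma mN_apply_self (i : ℕ) (u : ℕ → G) : mN i u i = u i * u (i+1) := by simp [mN]

lemma shift_mN_succ (i j : ℕ) (u : ℕ → G) :
    mN (i+1) u (j+1) = mN i (fun t => u (t+1)) j := by
  simp only [mN]
  split_ifs <;> first | rfl | omega

lemma mN_mN {i k : ℕ} (h : i ≤ k) (u : ℕ → G) :
    mN k (mN i u) = mN i (mN (k+1) u) := by
  funext j
  simp only [mN]
  split_ifs <;> first | rfl | omega | exact mul_assoc _ _ _

lemma double_sum_zero {V : Type*} [AddCommGroup V] {n : ℕ}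
    (f : (Fin n → G) → V) (u : ℕ → G) :
    ∑ x ∈ Finset.range (n+1), ∑ y ∈ Finset.range n,
      ((-1:ℤ)^(x+1)*(-1:ℤ)^(y+1)) • f (fun j : Fin n => mN y (mN x u) (j:ℕ)) = 0 := by
  classical
  rw [← Finset.sum_product' (Finset.range (n+1)) (Finset.range n)
      (fun x y => ((-1:ℤ)^(x+1)*(-1:ℤ)^(y+1)) • f (fun j : Fin n => mN y (mN x u) (j:ℕ))),
    ← Finset.sum_filter_add_sum_filter_not
      ((Finset.range (n+1)) ×ˢ (Finset.range n)) (fun p => p.1 ≤ p.2)]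
  have hbij :
      ∑ p ∈ ((Finset.range (n+1)) ×ˢ (Finset.range n)).filter (fun p => p.1 ≤ p.2),
        ((-1:ℤ)^(p.1+1)*(-1:ℤ)^(p.2+1)) • f (fun j : Fin n => mN p.2 (mN p.1 u) (j:ℕ))
      = ∑ p ∈ ((Finset.range (n+1)) ×ˢ (Finset.range n)).filter (fun p => ¬ p.1 ≤ p.2),
        -(((-1:ℤ)^(p.1+1)*(-1:ℤ)^(p.2+1)) • f (fun j : Fin n => mN p.2 (mN p.1 u) (j:ℕ))) := by
    refine Finset.sum_nbij' (fun p => (p.2+1, p.1)) (fun q => (q.2, q.1-1)) ?_ ?_ ?_ ?_ ?_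
    · rintro ⟨a, b⟩ hab
      simp only [Finset.mem_filter, Finset.mem_product, Finset.mem_range] at hab ⊢
      omega
    · rintro ⟨a, b⟩ hab
      simp only [Finset.mem_filter, Finset.mem_product, Finset.mem_range] at hab ⊢
      omega
    · rintro ⟨a, b⟩ _; rfl
    · rintro ⟨a, b⟩ hab
      simp only [Finset.mem_filter, Finset.mem_product, Finset.mem_range] at hab
      dsimp only
      rw [Prod.mk.injEq]
      omega
    · rintro ⟨a, b⟩ hab
      simp only [Finset.mem_filter, Finset.mem_product, Finset.mem_range] at hab
      rw [mN_mN hab.2 u]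
      rw [show ((-1:ℤ)^(a+1)*(-1:ℤ)^(b+1)) = -(((-1:ℤ)^(b+1+1)*(-1:ℤ)^(a+1))) by ring,
        neg_smul]
  rw [hbij, Finset.sum_neg_distrib, neg_add_cancel]

end mul

variable {G M N : Type*} [Group G] [AddCommGroup M] [AddCommGroup N]

lemma nabla_hat (μM : G → (M →+ M)) (μN : G → (N →+ N)) {n : ℕ}
    (f : (Fin n → G) → (M →+ N)) (u : ℕ → G) :
    nabla μM μN f (fun j : Fin (n+1) => u j) =
      (μN (u 0)).comp (f (fun j : Fin n => u ((j:ℕ)+1)))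
      + ∑ i ∈ Finset.range n, ((-1 : ℤ) ^ (i + 1)) • f (fun j : Fin n => mN i u j)
      + ((-1 : ℤ) ^ (n + 1)) • (f (fun j : Fin n => u j)).comp (μM (u n)) := by
  simp only [nabla, mergeAt_restr, Fin.val_succ, Fin.val_zero, Fin.val_last,
    Fin.coe_castSucc]
  rw [Finset.sum_range fun i => ((-1 : ℤ) ^ (i + 1)) • f (fun j : Fin n => mN i u j)]

lemma nabla_hat' (μM : G → (M →+ M)) (μN : G → (N →+ N)) {n : ℕ}
    (f : (Fin n → G) → (M →+ N)) (g : Fin (n+1) → G) (u : ℕ → G)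
    (hg : ∀ j : Fin (n+1), g j = u j) :
    nabla μM μN f g =
      (μN (u 0)).comp (f (fun j : Fin n => u ((j:ℕ)+1)))
      + ∑ i ∈ Finset.range n, ((-1 : ℤ) ^ (i + 1)) • f (fun j : Fin n => mN i u j)
      + ((-1 : ℤ) ^ (n + 1)) • (f (fun j : Fin n => u j)).comp (μM (u n)) := by
  rw [show g = fun j : Fin (n+1) => u j from funext hg]
  exact nabla_hat μM μN f u

variable {M' N' : Type*} [AddCommGroup M'] [AddCommGroup N']

lemma smul_comp' (z : ℤ) (a : M →+ N) (c : M' →+ M) :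
    (z • a).comp c = z • (a.comp c) := by ext m; simp

lemma comp_smul' (z : ℤ) (a : N →+ N') (c : M →+ N) :
    a.comp (z • c) = z • (a.comp c) := by ext m; simp

lemma sum_comp' {ι : Type*} (s : Finset ι) (a : ι → (M →+ N)) (c : M' →+ M) :
    (∑ i ∈ s, a i).comp c = ∑ i ∈ s, (a i).comp c := by ext m; simp

lemma comp_sum' {ι : Type*} (s : Finset ι) (a : ι → (M →+ N)) (c : N →+ N') :
    c.comp (∑ i ∈ s, a i) = ∑ i ∈ s, c.comp (a i) := by ext m; simp

lemma key (μM : G → (M →+ M)) (μN : G → (N →+ N)) {n : ℕ}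
    (f : (Fin n → G) → (M →+ N)) (u : ℕ → G) :
    nabla μM μN (nabla μM μN f) (fun j : Fin (n+1+1) => u j) =
      ((μN (u 0)).comp (μN (u 1)) - μN (u 0 * u 1)).comp
          (f (fun j : Fin n => u ((j:ℕ)+1+1)))
      - (f (fun j : Fin n => u j)).comp
          ((μM (u n)).comp (μM (u (n+1))) - μM (u n * u (n+1))) := by
  rw [nabla_hat μM μN (nabla μM μN f) u,
      nabla_hat' μM μN f _ (fun t => u (t+1)) (fun j => rfl),
      nabla_hat' μM μN f _ u (fun j => rfl),
      Finset.sum_congr rfl (fun i (_ : i ∈ Finset.range (n+1)) =>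
        congrArg (fun x => ((-1:ℤ)^(i+1)) • x)
          (nabla_hat' μM μN f _ (mN i u) (fun j => rfl)))]
  simp only [AddMonoidHom.comp_add, AddMonoidHom.add_comp, comp_sum', sum_comp',
    comp_smul', smul_comp', smul_add, Finset.smul_sum, smul_smul, zero_add,
    AddMonoidHom.sub_comp, AddMonoidHom.comp_sub, AddMonoidHom.comp_assoc,
    Finset.sum_add_distrib]
  have hA : (∑ x ∈ Finset.range (n + 1),
        (-1:ℤ) ^ (x + 1) • (μN (mN x u 0)).comp (f fun j : Fin n => mN x u ((j:ℕ) + 1)))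
      = -(μN (u 0 * u 1)).comp (f fun j : Fin n => u ((j:ℕ) + 1 + 1))
        - ∑ x ∈ Finset.range n,
            (-1:ℤ) ^ (x + 1) • (μN (u 0)).comp
              (f fun j : Fin n => mN x (fun t => u (t + 1)) (j:ℕ)) := by
    rw [Finset.sum_range_succ' (fun x =>
      (-1:ℤ) ^ (x + 1) • (μN (mN x u 0)).comp (f fun j : Fin n => mN x u ((j:ℕ) + 1))) n]
    simp only [mN_succ_zero, shift_mN_succ, mN_zero_zero, mN_zero_succ, zero_add,
      pow_one, neg_smul, one_smul]
    have h0 : (∑ x ∈ Finset.range n,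
          (-1:ℤ) ^ (x + 1 + 1) • (μN (u 0)).comp
            (f fun j : Fin n => mN x (fun t => u (t + 1)) (j:ℕ)))
        = - ∑ x ∈ Finset.range n,
            (-1:ℤ) ^ (x + 1) • (μN (u 0)).comp
              (f fun j : Fin n => mN x (fun t => u (t + 1)) (j:ℕ)) := by
      rw [← Finset.sum_neg_distrib]
      exact Finset.sum_congr rfl fun i _ => by rw [← neg_smul]; congr 1; ring
    rw [h0]; abel
  have hC : (∑ x ∈ Finset.range (n + 1),
        ((-1:ℤ) ^ (x + 1) * (-1:ℤ) ^ (n + 1)) •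
          (f fun j : Fin n => mN x u (j:ℕ)).comp (μM (mN x u n)))
      = (f fun j : Fin n => u (j:ℕ)).comp (μM (u n * u (n + 1)))
        - ∑ x ∈ Finset.range n,
            ((-1:ℤ) ^ (n + 1 + 1) * (-1:ℤ) ^ (x + 1)) •
              (f fun j : Fin n => mN x u (j:ℕ)).comp (μM (u (n + 1))) := by
    rw [Finset.sum_range_succ]
    have e1 : (fun j : Fin n => mN n u (j:ℕ)) = fun j : Fin n => u (j:ℕ) :=
      funext fun j => mN_apply_of_lt j.isLt u
    rw [e1, mN_apply_self,
      show ((-1:ℤ) ^ (n + 1) * (-1:ℤ) ^ (n + 1)) = 1 by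
        rw [← pow_add]; exact Even.neg_one_pow ⟨n+1, by ring⟩,
      one_smul]
    have h0 : (∑ x ∈ Finset.range n,
          ((-1:ℤ) ^ (x + 1) * (-1:ℤ) ^ (n + 1)) •
            (f fun j : Fin n => mN x u (j:ℕ)).comp (μM (mN x u n)))
        = - ∑ x ∈ Finset.range n,
            ((-1:ℤ) ^ (n + 1 + 1) * (-1:ℤ) ^ (x + 1)) •
              (f fun j : Fin n => mN x u (j:ℕ)).comp (μM (u (n + 1))) := by
      rw [← Finset.sum_neg_distrib]
      refine Finset.sum_congr rfl fun i hi => ?_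
      rw [mN_apply_of_gt (Finset.mem_range.mp hi) u, ← neg_smul]
      congr 1; ring
    rw [h0]; abel
  have hX : ((-1:ℤ) ^ (n + 1 + 1)) •
        (μN (u 0)).comp ((f fun j : Fin n => u ((j:ℕ) + 1)).comp (μM (u (n + 1))))
      = -(((-1:ℤ) ^ (n + 1)) •
        (μN (u 0)).comp ((f fun j : Fin n => u ((j:ℕ) + 1)).comp (μM (u (n + 1))))) := by
    rw [← neg_smul]; congr 1; ring
  have hY : ((-1:ℤ) ^ (n + 1 + 1) * (-1:ℤ) ^ (n + 1)) •
        (f fun j : Fin n => u (j:ℕ)).comp ((μM (u n)).comp (μM (u (n + 1))))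
      = -((f fun j : Fin n => u (j:ℕ)).comp ((μM (u n)).comp (μM (u (n + 1))))) := by
    rw [show ((-1:ℤ) ^ (n + 1 + 1) * (-1:ℤ) ^ (n + 1)) = -1 by
        rw [← pow_add]; exact Odd.neg_one_pow ⟨n+1, by ring⟩,
      neg_smul, one_smul]
  rw [hA, hC, double_sum_zero f u, hX, hY]
  abel

end NablaAux


/-- If `μ_M(e) = id` and `μ_N(e) = id`, then the square of the
connection `∇` on group cochains is given by commutation with the curvatures
`R(g,h) = μ(g)∘μ(h) − μ(gh)`:
`∇²f(g₁,…,g_{n+2}) = (μ_N(g₁)∘μ_N(g₂) − μ_N(g₁g₂))∘f(g₃,…,g_{n+2})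
  − f(g₁,…,gₙ)∘(μ_M(g_{n+1})∘μ_M(g_{n+2}) − μ_M(g_{n+1}g_{n+2}))`. -/
theorem nabla_sq {G M N : Type*} [Group G] [AddCommGroup M] [AddCommGroup N]
    (μM : G → (M →+ M)) (μN : G → (N →+ N))
    (hM : μM 1 = AddMonoidHom.id M) (hN : μN 1 = AddMonoidHom.id N)
    {n : ℕ} (f : (Fin n → G) → (M →+ N)) (g : Fin (n + 2) → G) :
    nabla μM μN (nabla μM μN f) g =
      ((μN (g 0)).comp (μN (g 1)) - μN (g 0 * g 1)).comp
        (f (fun j => g j.succ.succ))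
      - (f (fun j => g j.castSucc.castSucc)).comp
          ((μM (g (Fin.castSucc (Fin.last n)))).comp (μM (g (Fin.last (n + 1))))
            - μM (g (Fin.castSucc (Fin.last n)) * g (Fin.last (n + 1)))) := by
  classical
  set u : ℕ → G := fun t => if h : t < n + 2 then g ⟨t, h⟩ else 1 with hu
  have hg : g = fun j : Fin (n+2) => u (j:ℕ) := by
    funext j
    simp only [hu]
    rw [dif_pos j.isLt]
  rw [hg]
  simp only [Fin.val_succ, Fin.coe_castSucc, Fin.val_zero, Fin.val_one, Fin.val_last]
  exact NablaAux.key μM μN f u
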